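/- Let $F(z) = \sum_{k\ge 0} \xi_k a_k z^k$ be an entire function, where $\xi_k \in \{\pm 1\}$ and $\sum_k |a_k| r^k < \infty$ for all $r > 0$. Define $\sigma_F(r)^2 = \sum_{k\ge 0} |a_k|^2 r^{2k}$, the maximal term $\mu_F(s) = \max_{k\ge 0} |a_k| s^k$, and the central index $\nu_F(s) = \max\{k : |a_k| s^k = \mu_F(s)\}$. Then for every $r \ge 1$ and $\tau > 0$, writing $\nu_- = \nu_F(r e^{-\tau})$ and $\nu_+ = \nu_F(r e^{\tau})$, one has for all $z$ with $|z| = r$: $\bigl| F(z) - \sum_{\nu_- \le k \le \nu_+} \xi_k a_k z^k \bigr| \le \frac{2\,\sigma_F(r)}{e^{\tau} - 1}$. -/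

import Mathlib

open Complex

/-- The maximal term `μ_F(s) = max_k |a_k| s^k` of a Taylor series with coefficients `a`. -/
noncomputable def maxTerm (a : ℕ → ℂ) (s : ℝ) : ℝ := ⨆ k : ℕ, ‖a k‖ * s ^ k

/-- `σ_F(r) = (∑ |a_k|² r^{2k})^{1/2}`. -/
noncomputable def sigmaF (a : ℕ → ℂ) (r : ℝ) : ℝ :=
  Real.sqrt (∑' k : ℕ, ‖a k‖ ^ 2 * r ^ (2 * k))

/-- Approximation of a Rademacher Taylor series by the central group of its terms:
for `|z| = r ≥ 1` and `τ > 0`, with `νm, νp` the central indices at `r e^{-τ}` and `r e^{τ}`,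
the tail outside `[νm, νp]` is bounded by `2 σ_F(r) / (e^τ - 1)`. -/
theorem central_terms_approximation
    (ξ : ℕ → ℝ) (a : ℕ → ℂ) (F : ℂ → ℂ)
    (hξ : ∀ k, ξ k = 1 ∨ ξ k = -1)
    (hsum : ∀ r : ℝ, 0 < r → Summable (fun k : ℕ => ‖a k‖ * r ^ k))
    (hF : ∀ z : ℂ, HasSum (fun k : ℕ => (ξ k : ℂ) * a k * z ^ k) (F z))
    (r τ : ℝ) (hr : 1 ≤ r) (hτ : 0 < τ) (νm νp : ℕ)
    (hνm : IsGreatest {k : ℕ |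
      ‖a k‖ * (r * Real.exp (-τ)) ^ k = maxTerm a (r * Real.exp (-τ))} νm)
    (hνp : IsGreatest {k : ℕ |
      ‖a k‖ * (r * Real.exp τ) ^ k = maxTerm a (r * Real.exp τ)} νp)
    (z : ℂ) (hz : ‖z‖ = r) :
    ‖F z - ∑ k ∈ Finset.Icc νm νp, (ξ k : ℂ) * a k * z ^ k‖ ≤
      2 * sigmaF a r / (Real.exp τ - 1) := by
  have hr0 : (0:ℝ) < r := lt_of_lt_of_le one_pos hr
  have hE0 : (0:ℝ) < Real.exp τ := Real.exp_pos _
  have hE1 : (1:ℝ) < Real.exp τ := by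
    have : Real.exp 0 < Real.exp τ := Real.exp_lt_exp.mpr hτ
    simpa using this
  set q : ℝ := Real.exp (-τ) with hqdef
  have hq0 : (0:ℝ) < q := Real.exp_pos _
  have hq1 : q < 1 := by
    have : Real.exp (-τ) < Real.exp 0 := Real.exp_lt_exp.mpr (by linarith)
    simpa [hqdef] using this
  have hqE : q * Real.exp τ = 1 := by
    rw [hqdef, ← Real.exp_add]; simp
  set b : ℕ → ℝ := fun k => ‖a k‖ * r ^ k with hbdef
  have hb0 : ∀ k, 0 ≤ b k := fun k =>
    mul_nonneg (norm_nonneg _) (by positivity)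
  have hbsum : Summable b := hsum r hr0
  have hterm_le : ∀ s : ℝ, 0 < s → ∀ k, ‖a k‖ * s ^ k ≤ maxTerm a s := by
    intro s hs k
    have hbd : BddAbove (Set.range fun k => ‖a k‖ * s ^ k) :=
      (hsum s hs).tendsto_atTop_zero.bddAbove_range
    exact le_ciSup hbd k
  set σ : ℝ := sigmaF a r with hσ
  have hσdef : σ = Real.sqrt (∑' k, b k ^ 2) := by
    rw [hσ]
    unfold sigmaF
    congr 1
    refine tsum_congr fun k => ?_
    simp only [hbdef]
    ring
  have hσ0 : 0 ≤ σ := Real.sqrt_nonneg _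
  have hsq_sum : Summable (fun k => b k ^ 2) := by
    refine Summable.of_nonneg_of_le (fun k => sq_nonneg _) (fun k => ?_)
      (hbsum.mul_left (maxTerm a r))
    have h1 : b k ≤ maxTerm a r := hterm_le r hr0 k
    nlinarith [hb0 k]
  have hbσ : ∀ k, b k ≤ σ := by
    intro k
    rw [hσdef]
    have h1 : b k ^ 2 ≤ ∑' k, b k ^ 2 := hsq_sum.le_tsum k (fun j _ => sq_nonneg _)
    calc b k = Real.sqrt (b k ^ 2) := (Real.sqrt_sq (hb0 k)).symm
      _ ≤ _ := Real.sqrt_le_sqrt h1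
  -- bound for small indices
  have hlow : ∀ k, k < νm → b k ≤ σ * q ^ (νm - k) := by
    intro k hk
    have hs1 : (0:ℝ) < r * Real.exp (-τ) := by positivity
    have h1 : ‖a k‖ * (r * Real.exp (-τ)) ^ k
        ≤ ‖a νm‖ * (r * Real.exp (-τ)) ^ νm := by
      have := hterm_le _ hs1 k
      rw [← hνm.1] at this
      exact this
    have h2 : b k * q ^ k ≤ b νm * q ^ νm := by
      calc b k * q ^ k = ‖a k‖ * (r * Real.exp (-τ)) ^ k := by
            simp only [hbdef, mul_pow, hqdef]; ring
        _ ≤ ‖a νm‖ * (r * Real.exp (-τ)) ^ νm := h1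
        _ = b νm * q ^ νm := by simp only [hbdef, mul_pow, hqdef]; ring
    have h3 : q ^ νm = q ^ (νm - k) * q ^ k := by
      rw [← pow_add]; congr 1; omega
    have hqk : (0:ℝ) < q ^ k := pow_pos hq0 k
    have h4 : b k ≤ b νm * q ^ (νm - k) := by
      rw [h3, ← mul_assoc] at h2
      exact (mul_le_mul_iff_of_pos_right hqk).mp h2
    calc b k ≤ b νm * q ^ (νm - k) := h4
      _ ≤ σ * q ^ (νm - k) :=
        mul_le_mul_of_nonneg_right (hbσ νm) (le_of_lt (pow_pos hq0 _))
  -- bound for large indices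
  have hhigh : ∀ k, νp < k → b k ≤ σ * q ^ (k - νp) := by
    intro k hk
    have hs2 : (0:ℝ) < r * Real.exp τ := by positivity
    have h1 : ‖a k‖ * (r * Real.exp τ) ^ k
        ≤ ‖a νp‖ * (r * Real.exp τ) ^ νp := by
      have := hterm_le _ hs2 k
      rw [← hνp.1] at this
      exact this
    have h2 : b k * Real.exp τ ^ k ≤ b νp * Real.exp τ ^ νp := by
      calc b k * Real.exp τ ^ k = ‖a k‖ * (r * Real.exp τ) ^ k := by
            simp only [hbdef, mul_pow]; ring
        _ ≤ ‖a νp‖ * (r * Real.exp τ) ^ νp := h1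
        _ = b νp * Real.exp τ ^ νp := by simp only [hbdef, mul_pow]; ring
    have h3 : Real.exp τ ^ k = Real.exp τ ^ (k - νp) * Real.exp τ ^ νp := by
      rw [← pow_add]; congr 1; omega
    have hEp : (0:ℝ) < Real.exp τ ^ νp := pow_pos hE0 _
    have h5 : b k * Real.exp τ ^ (k - νp) ≤ b νp := by
      rw [h3, ← mul_assoc] at h2
      exact (mul_le_mul_iff_of_pos_right hEp).mp h2
    have h6 : q ^ (k - νp) * Real.exp τ ^ (k - νp) = 1 := by
      rw [← mul_pow, hqE, one_pow]
    have hqd : (0:ℝ) ≤ q ^ (k - νp) := le_of_lt (pow_pos hq0 _)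
    have h7 := mul_le_mul_of_nonneg_right h5 hqd
    have h8 : b k * Real.exp τ ^ (k - νp) * q ^ (k - νp) = b k := by
      rw [mul_assoc, mul_comm (Real.exp τ ^ (k - νp)), h6, mul_one]
    rw [h8] at h7
    calc b k ≤ b νp * q ^ (k - νp) := h7
      _ ≤ σ * q ^ (k - νp) := mul_le_mul_of_nonneg_right (hbσ νp) hqd
  -- the majorant
  set m1 : ℕ → ℝ := fun k => if k < νm then σ * q ^ (νm - k) else 0 with hm1def
  set m2 : ℕ → ℝ := fun k => if νp < k then σ * q ^ (k - νp) else 0 with hm2def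
  set m : ℕ → ℝ := fun k => m1 k + m2 k with hmdef
  have hm1nn : ∀ k, 0 ≤ m1 k := by
    intro k; simp only [hm1def]; split <;> positivity
  have hm2nn : ∀ k, 0 ≤ m2 k := by
    intro k; simp only [hm2def]; split <;> positivity
  have hm0 : ∀ k, 0 ≤ m k := fun k => add_nonneg (hm1nn k) (hm2nn k)
  have hm1sum : Summable m1 := by
    apply summable_of_ne_finset_zero (s := Finset.range νm)
    intro k hk
    simp only [Finset.mem_range, not_lt] at hk
    simp only [hm1def, if_neg (by omega : ¬ k < νm)]
  have hgeo : Summable (fun j : ℕ => σ * q * q ^ j) :=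
    (summable_geometric_of_lt_one (le_of_lt hq0) hq1).mul_left _
  have hgeo_tsum : ∑' j : ℕ, σ * q * q ^ j = σ * q * (1 - q)⁻¹ := by
    rw [tsum_mul_left, tsum_geometric_of_lt_one (le_of_lt hq0) hq1]
  have hi : Function.Injective (fun j : ℕ => νp + 1 + j) := by
    intro x y h; simp only [] at h; omega
  have hrange : Function.support m2 ⊆ Set.range (fun j : ℕ => νp + 1 + j) := by
    intro x hx
    simp only [hm2def, Function.mem_support] at hx
    have hc : νp < x := by
      by_contra hnc
      exact hx (if_neg hnc)
    exact ⟨x - νp - 1, by simp only []; omega⟩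
  have hcomp : (fun j : ℕ => m2 (νp + 1 + j)) = fun j : ℕ => σ * q * q ^ j := by
    funext j
    simp only [hm2def]
    rw [if_pos (by omega : νp < νp + 1 + j)]
    have h9 : νp + 1 + j - νp = j + 1 := by omega
    rw [h9, pow_succ]
    ring
  have hrange0 : ∀ x ∉ Set.range (fun j : ℕ => νp + 1 + j), m2 x = 0 := by
    intro x hx
    by_contra hne
    exact hx (hrange hne)
  have hm2sum : Summable m2 := by
    rw [← hi.summable_iff hrange0]
    exact hgeo.congr fun j => (congrFun hcomp j).symm
  have hmsum : Summable m := hm1sum.add hm2sum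
  have htsum2 : ∑' k, m2 k = σ * q * (1 - q)⁻¹ := by
    rw [← hi.tsum_eq hrange, hcomp, hgeo_tsum]
  have htsum1 : ∑' k, m1 k ≤ σ * q * (1 - q)⁻¹ := by
    rw [tsum_eq_sum (s := Finset.range νm) (fun k hk => by
      simp only [Finset.mem_range, not_lt] at hk
      simp only [hm1def, if_neg (by omega : ¬ k < νm)])]
    have hs1 : ∑ k ∈ Finset.range νm, m1 k = ∑ j ∈ Finset.range νm, σ * q * q ^ j := by
      rw [← Finset.sum_range_reflect (fun j => σ * q * q ^ j) νm]
      refine Finset.sum_congr rfl fun k hk => ?_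
      simp only [Finset.mem_range] at hk
      simp only [hm1def, if_pos hk]
      have h9 : νm - k = (νm - 1 - k) + 1 := by omega
      rw [h9, pow_succ]
      ring
    rw [hs1, ← hgeo_tsum]
    exact Summable.sum_le_tsum _ (fun j _ => by positivity) hgeo
  have htsum_m : ∑' k, m k ≤ 2 * σ * (q * (1 - q)⁻¹) := by
    simp only [hmdef]
    rw [Summable.tsum_add hm1sum hm2sum]
    linarith
  -- split off the central terms
  set g : ℕ → ℂ := fun k => (ξ k : ℂ) * a k * z ^ k with hgdef
  have hgnorm : ∀ k, ‖g k‖ = b k := by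
    intro k
    rcases hξ k with h | h <;>
      simp [hgdef, hbdef, norm_mul, norm_pow, hz, h]
  have hgsum : Summable g := (hF z).summable
  set S : Finset ℕ := Finset.Icc νm νp with hSdef
  have hsplit : F z - ∑ k ∈ S, g k = ∑' (k : ↥((S : Set ℕ))ᶜ), g ↑k := by
    have h := Summable.sum_add_tsum_compl (s := S) hgsum
    rw [(hF z).tsum_eq] at h
    linear_combination -h
  have hbsub : Summable (fun k : ↥((S : Set ℕ))ᶜ => b ↑k) := hbsum.subtype _
  have hnsub : Summable (fun k : ↥((S : Set ℕ))ᶜ => ‖g ↑k‖) :=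
    hbsub.congr fun k => (hgnorm ↑k).symm
  have hfinal : ‖∑' (k : ↥((S : Set ℕ))ᶜ), g ↑k‖ ≤ ∑' k, m k := by
    calc ‖∑' (k : ↥((S : Set ℕ))ᶜ), g ↑k‖
        = ‖∑' (k : ↥((S : Set ℕ))ᶜ), g ↑k‖ := rfl
      _ ≤ ∑' (k : ↥((S : Set ℕ))ᶜ), ‖g ↑k‖ := norm_tsum_le_tsum_norm hnsub
      _ = ∑' (k : ↥((S : Set ℕ))ᶜ), b ↑k := tsum_congr fun k => hgnorm ↑k
      _ ≤ ∑' k, m k := by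
          refine hbsub.tsum_le_tsum_of_inj (Subtype.val) Subtype.val_injective
            (fun c _ => hm0 c) (fun x => ?_) hmsum
          have hx : (x : ℕ) ∉ S := x.2
          have hx' : (x : ℕ) < νm ∨ νp < (x : ℕ) := by
            simp only [hSdef, Finset.mem_Icc, not_and, not_le] at hx
            omega
          rcases hx' with h | h
          · calc b ↑x ≤ σ * q ^ (νm - ↑x) := hlow _ h
              _ ≤ m ↑x := by
                  simp only [hmdef, hm1def, if_pos h]
                  have := hm2nn (x : ℕ)
                  linarith
          · calc b ↑x ≤ σ * q ^ ((x : ℕ) - νp) := hhigh _ h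
              _ ≤ m ↑x := by
                  simp only [hmdef, hm2def, if_pos h]
                  have := hm1nn (x : ℕ)
                  linarith
  have hfrac : q * (1 - q)⁻¹ = (Real.exp τ - 1)⁻¹ := by
    rw [hqdef, Real.exp_neg]
    rw [inv_eq_one_div, inv_eq_one_div]
    rw [div_mul_div_comm, one_mul]
    field_simp
  rw [hsplit]
  calc ‖∑' (k : ↥((S : Set ℕ))ᶜ), g ↑k‖
      ≤ ∑' k, m k := hfinal
    _ ≤ 2 * σ * (q * (1 - q)⁻¹) := htsum_m
    _ = 2 * σ / (Real.exp τ - 1) := by rw [hfrac, div_eq_mul_inv]
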